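/- Let R be a Noetherian ring and I an ideal of R such that the associated graded ring G(I) = ⊕_{n≥0} I^n/I^{n+1} is reduced. Then I^n is integrally closed (i.e. equal to its integral closure) for all n ≥ 1. -/

import Mathlib

open Finset IsLocalRing

/-- Length of a module: longest chain in its submodule lattice. -/
noncomputable def flen (R : Type*) [CommRing R] (M : Type*) [AddCommGroup M] [Module R M] : ℕ :=
  (WithBot.unbotD 0 (Order.krullDim (Submodule R M))).toNat

/-- Length `λ(P/N)` of the subquotient of `R` by submodules `N ≤ P`. -/
noncomputable def lenq {R : Type*} [CommRing R] (P N : Submodule R R) : ℕ :=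
  flen R (↥P ⧸ (N.comap P.subtype))

/-- `x` is integral over the ideal `I`: it satisfies an equation
`x^n + a 1 * x^(n-1) + ⋯ + a n = 0` with `a i ∈ I^i`. -/
def Ideal.IsIntOver {R : Type*} [CommRing R] (I : Ideal R) (x : R) : Prop :=
  ∃ (n : ℕ) (a : ℕ → R), 0 < n ∧ (∀ i ∈ Finset.Icc 1 n, a i ∈ I ^ i) ∧
    x ^ n + ∑ i ∈ Finset.Icc 1 n, a i * x ^ (n - i) = 0

/-- The integral closure of an ideal (the set of integral elements is an ideal,
so taking the span is harmless). -/
def Ideal.intCl {R : Type*} [CommRing R] (I : Ideal R) : Ideal R :=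
  Ideal.span {x | I.IsIntOver x}

set_option synthInstance.maxHeartbeats 800000 in
open Polynomial in
/-- Every element of the extension of `I` to the Rees algebra has its `j`-th
coefficient in `I ^ (j+1)`. -/
lemma coeff_mem_of_mem_map {R : Type*} [CommRing R] {I : Ideal R}
    {q : ↥(reesAlgebra I)} (hq : q ∈ I.map (algebraMap R ↥(reesAlgebra I))) :
    ∀ j, (q : R[X]).coeff j ∈ I ^ (j + 1) := by
  rw [Ideal.map, Ideal.span] at hq
  refine Submodule.span_induction ?_ ?_ ?_ ?_ hq
  · rintro _ ⟨b, hb, rfl⟩ j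
    have : ((algebraMap R ↥(reesAlgebra I) b : ↥(reesAlgebra I)) : R[X]) = C b := rfl
    rw [this, coeff_C]
    split_ifs with h
    · subst h; simpa using hb
    · exact zero_mem _
  · intro j; simp
  · intro p q _ _ hp hq j
    simpa using add_mem (hp j) (hq j)
  · intro a p _ hp j
    rw [smul_eq_mul]
    have : ((a * p : ↥(reesAlgebra I)) : R[X]) = (a : R[X]) * (p : R[X]) := rfl
    rw [this, coeff_mul]
    refine sum_mem fun c hc => ?_
    rw [Finset.HasAntidiagonal.mem_antidiagonal] at hc
    have h1 : (a : R[X]).coeff c.1 ∈ I ^ c.1 := a.2 c.1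
    have := Ideal.mul_mem_mul h1 (hp c.2)
    rwa [← pow_add, show c.1 + (c.2 + 1) = j + 1 by omega] at this

open Polynomial in
/-- A monomial of degree `s` whose coefficient lies in `I ^ (s+1)` belongs to the
extension of `I` to the Rees algebra. -/
lemma monomial_mem_map {R : Type*} [CommRing R] {I : Ideal R} {s : ℕ} {y : R}
    (hy : y ∈ I ^ (s + 1)) (h : (monomial s y : R[X]) ∈ reesAlgebra I) :
      (⟨monomial s y, h⟩ : ↥(reesAlgebra I)) ∈ I.map (algebraMap R ↥(reesAlgebra I)) := by
  rw [pow_succ] at hy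
  have main : ∃ (h' : (monomial s y : R[X]) ∈ reesAlgebra I),
      (⟨monomial s y, h'⟩ : ↥(reesAlgebra I)) ∈ I.map (algebraMap R ↥(reesAlgebra I)) := by
    refine Submodule.mul_induction_on hy ?_ ?_
    · intro b hb a ha
      have hmem : (monomial s (b * a) : R[X]) ∈ reesAlgebra I :=
        reesAlgebra.monomial_mem.mpr (Ideal.mul_mem_right a _ hb)
      refine ⟨hmem, ?_⟩
      have key : (⟨monomial s (b * a), hmem⟩ : ↥(reesAlgebra I)) =
          (⟨monomial s b, reesAlgebra.monomial_mem.mpr hb⟩ : ↥(reesAlgebra I)) *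
            algebraMap R ↥(reesAlgebra I) a := by
        apply Subtype.ext
        show monomial s (b * a) = monomial s b * C a
        rw [mul_comm (monomial s b : R[X]), C_mul_monomial, mul_comm a b]
      rw [key]
      exact Ideal.mul_mem_left _ _ (Ideal.mem_map_of_mem _ ha)
    · rintro y1 y2 ⟨h1, m1⟩ ⟨h2, m2⟩
      have hmem : (monomial s (y1 + y2) : R[X]) ∈ reesAlgebra I := by
        rw [map_add]; exact add_mem h1 h2
      refine ⟨hmem, ?_⟩
      have key : (⟨monomial s (y1 + y2), hmem⟩ : ↥(reesAlgebra I)) =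
          (⟨monomial s y1, h1⟩ : ↥(reesAlgebra I)) + ⟨monomial s y2, h2⟩ := by
        apply Subtype.ext
        show monomial s (y1 + y2) = monomial s y1 + monomial s y2
        rw [map_add]
      rw [key]
      exact add_mem m1 m2
  obtain ⟨h', hm⟩ := main
  exact hm

open Polynomial in
/-- Key step: if `G(I)` is reduced, `x ∈ I^r` and `x^m ∈ I^(rm+1)`, then `x ∈ I^(r+1)`
(the leading form of `x` is nilpotent, hence zero). -/
lemma step_lemma {R : Type*} [CommRing R] {I : Ideal R}
    (hred : IsReduced (↥(reesAlgebra I) ⧸ (I.map (algebraMap R ↥(reesAlgebra I)))))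
    {x : R} {r m : ℕ} (hm : 0 < m) (hxr : x ∈ I ^ r) (hxm : x ^ m ∈ I ^ (r * m + 1)) :
    x ∈ I ^ (r + 1) := by
  set J := I.map (algebraMap R ↥(reesAlgebra I)) with hJ
  set e : ↥(reesAlgebra I) := ⟨monomial r x, reesAlgebra.monomial_mem.mpr hxr⟩ with he
  have hxm' : x ^ m ∈ I ^ (r * m) := Ideal.pow_le_pow_right (by omega) hxm
  have hepow : e ^ m =
      ⟨monomial (r * m) (x ^ m), reesAlgebra.monomial_mem.mpr hxm'⟩ := by
    apply Subtype.ext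
    show ((e ^ m : ↥(reesAlgebra I)) : R[X]) = monomial (r * m) (x ^ m)
    rw [SubmonoidClass.coe_pow]
    show (monomial r x : R[X]) ^ m = monomial (r * m) (x ^ m)
    rw [monomial_pow]
  have hnil : IsNilpotent (Ideal.Quotient.mk J e) := by
    refine ⟨m, ?_⟩
    rw [← map_pow, hepow, Ideal.Quotient.eq_zero_iff_mem]
    exact monomial_mem_map hxm _
  have hz := hnil.eq_zero
  rw [Ideal.Quotient.eq_zero_iff_mem] at hz
  have := coeff_mem_of_mem_map hz r
  simpa [he, coeff_monomial] using this

/-- If `R` is Noetherian and the associated graded ring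
`G(I) ≅ (Rees algebra of I)/(I · Rees algebra of I)` is reduced,
then `I^n` is integrally closed for all `n ≥ 1`. -/
theorem stmt_0 {R : Type*} [CommRing R] [IsNoetherianRing R] (I : Ideal R)
    (hred : IsReduced
      (↥(reesAlgebra I) ⧸ (I.map (algebraMap R ↥(reesAlgebra I)))))
    (n : ℕ) (hn : 1 ≤ n) :
    (I ^ n).intCl = I ^ n := by
  apply le_antisymm
  · rw [Ideal.intCl, Ideal.span_le]
    rintro x ⟨m, a, hm, ha, heq⟩
    show x ∈ I ^ n
    by_cases hall : ∀ k, x ∈ I ^ k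
    · exact hall n
    push_neg at hall
    classical
    have hK := Nat.find_spec hall
    set K := Nat.find hall with hKdef
    have hK1 : 1 ≤ K := by
      rcases Nat.eq_zero_or_pos K with h0 | h1
      · exfalso; apply hK; simp [h0]
      · exact h1
    set r := K - 1 with hr
    have hxr : x ∈ I ^ r := by
      by_contra hc
      have hle : K ≤ r := Nat.find_le hc
      omega
    have hnotsucc : x ∉ I ^ (r + 1) := by
      rw [show r + 1 = K by omega]; exact hK
    rcases le_or_gt n r with hnr | hrn
    · exact Ideal.pow_le_pow_right hnr hxr
    -- r < n : derive contradiction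
    exfalso
    apply hnotsucc
    refine step_lemma hred hm hxr ?_
    have hsum : x ^ m = -∑ i ∈ Finset.Icc 1 m, a i * x ^ (m - i) :=
      eq_neg_of_add_eq_zero_left heq
    rw [hsum]
    refine neg_mem (Submodule.sum_mem _ fun i hi => ?_)
    rw [Finset.mem_Icc] at hi
    have hai : a i ∈ I ^ (n * i) := by
      have := ha i (Finset.mem_Icc.mpr hi)
      rwa [← pow_mul] at this
    have hxi : x ^ (m - i) ∈ I ^ (r * (m - i)) := by
      have := Ideal.pow_mem_pow hxr (m - i)
      rwa [← pow_mul] at this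
    have hmul := Ideal.mul_mem_mul hai hxi
    rw [← pow_add] at hmul
    refine Ideal.pow_le_pow_right ?_ hmul
    -- r * m + 1 ≤ n * i + r * (m - i)
    have h1 : 1 ≤ i := hi.1
    have h2 : i ≤ m := hi.2
    have hrn' : r + 1 ≤ n := hrn
    have expand : n * i + r * (m - i) = r * m + (n - r) * i := by
      have : n * i = r * i + (n - r) * i := by
        rw [← Nat.add_mul]; congr 1; omega
      rw [this]
      have : r * i + r * (m - i) = r * m := by
        rw [← Nat.mul_add]; congr 1; omega
      omega
    rw [expand]
    have h3 : 1 ≤ n - r := by omega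
    have h4 : 1 * 1 ≤ (n - r) * i := Nat.mul_le_mul h3 h1
    omega
  · intro x hx
    refine Ideal.subset_span ⟨1, fun _ => -x, one_pos, ?_, by simp⟩
    intro i hi
    rw [Finset.mem_Icc] at hi
    have : i = 1 := by omega
    subst this
    simpa using hx
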